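/- Let K_w ∈ ℝ^{N×N} and K_h ∈ ℝ^{L×L} be symmetric positive semidefinite matrices whose eigenvalues are all at most λ_max > 0, and let B ∈ ℝ^{N×p} and C ∈ ℝ^{L×p}. Then the matrix F = K_w B Cᵀ K_h satisfies ‖F‖_* ≤ (λ_max/2)·( trace(Bᵀ K_w B) + trace(Cᵀ K_h C) ). In particular, if trace(Bᵀ K_w B) + trace(Cᵀ K_h C) ≤ t_B then ‖F‖_* ≤ λ_max·t_B/2. -/

import Mathlib

open Matrix

/-- The nuclear norm of a real `N × L` matrix `F`: the trace of the positive semidefinite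
square root of `Fᵀ F` (equivalently, the sum of the singular values of `F`). -/
noncomputable def nuclearNorm {N L : ℕ} (F : Matrix (Fin N) (Fin L) ℝ) : ℝ :=
  (((Matrix.posSemidef_conjTranspose_mul_self F).1.eigenvectorUnitary :
        Matrix (Fin L) (Fin L) ℝ) *
      diagonal (fun i => ((√((Matrix.posSemidef_conjTranspose_mul_self F).1.eigenvalues i) : ℝ) : ℝ)) *
      (star (Matrix.posSemidef_conjTranspose_mul_self F).1.eigenvectorUnitary :
        Matrix (Fin L) (Fin L) ℝ)).trace

private lemma trSelfMulTransposeNonneg {m q : ℕ} (W : Matrix (Fin m) (Fin q) ℝ) :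
    0 ≤ (W * Wᵀ).trace := by
  simp only [trace, diag, mul_apply, transpose_apply]
  exact Finset.sum_nonneg fun _ _ => Finset.sum_nonneg fun _ _ => mul_self_nonneg _

private lemma dotSelfNonneg {m : ℕ} (a : Fin m → ℝ) : 0 ≤ a ⬝ᵥ a :=
  Finset.sum_nonneg fun _ _ => mul_self_nonneg _

private lemma dotLeHalf {m : ℕ} (a b : Fin m → ℝ) : a ⬝ᵥ b ≤ (a ⬝ᵥ a + b ⬝ᵥ b) / 2 := by
  have h := dotSelfNonneg (a - b)
  have he : (a - b) ⬝ᵥ (a - b) = a ⬝ᵥ a - 2 * (a ⬝ᵥ b) + b ⬝ᵥ b := by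
    simp [sub_dotProduct, dotProduct_sub, dotProduct_comm b a]; ring
  linarith [he ▸ h]

private lemma dotTransposeMulVec {a b : ℕ} (W : Matrix (Fin a) (Fin b) ℝ)
    (x y : Fin a → ℝ) : (Wᵀ *ᵥ x) ⬝ᵥ (Wᵀ *ᵥ y) = x ⬝ᵥ ((W * Wᵀ) *ᵥ y) := by
  symm
  rw [← mulVec_mulVec, dotProduct_mulVec x, ← mulVec_transpose]

private lemma nuclearNorm_factor_le {n l pp : ℕ} (X : Matrix (Fin n) (Fin pp) ℝ)
    (Y : Matrix (Fin l) (Fin pp) ℝ) :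
    nuclearNorm (X * Yᵀ) ≤ ((Xᵀ * X).trace + (Yᵀ * Y).trace) / 2 := by
  set M : Matrix (Fin n) (Fin l) ℝ := X * Yᵀ with hMdef
  have hM : (Mᴴ * M).PosSemidef := posSemidef_conjTranspose_mul_self M
  set A := Mᴴ * M with hA
  have hH : A.IsHermitian := hM.1
  set d : Fin l → ℝ := hH.eigenvalues with hd
  have hd0 : ∀ i, 0 ≤ d i := fun i => hM.eigenvalues_nonneg i
  set Qm : Matrix (Fin l) (Fin l) ℝ := (hH.eigenvectorUnitary : Matrix (Fin l) (Fin l) ℝ)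
    with hQm
  -- trace of sqrt
  have htr : nuclearNorm M = ∑ i, Real.sqrt (d i) := by
    show (Qm * diagonal (fun i => √(d i)) * star Qm).trace = _
    rw [trace_mul_cycle,
      show star Qm * Qm = 1 from mem_unitaryGroup_iff'.mp hH.eigenvectorUnitary.2,
      one_mul, trace_diagonal]
  set q : Fin l → (Fin l → ℝ) := fun i => ⇑(hH.eigenvectorBasis i) with hq
  have hQq : ∀ k i, Qm k i = q i k := fun k i => hH.eigenvectorUnitary_apply k i
  have horth : ∀ i j, q i ⬝ᵥ q j = if i = j then 1 else 0 := by
    intro i j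
    have h1 : star Qm * Qm = 1 := mem_unitaryGroup_iff'.mp hH.eigenvectorUnitary.2
    have := congrFun (congrFun h1 i) j
    simpa [mul_apply, one_apply, dotProduct, hQq, star_apply] using this
  have heig : ∀ i, A *ᵥ q i = d i • q i := fun i => hH.mulVec_eigenvectorBasis i
  set v : Fin l → (Fin n → ℝ) := fun i => M *ᵥ q i with hv
  have hvv : ∀ i j, v i ⬝ᵥ v j = d j * (q i ⬝ᵥ q j) := by
    intro i j
    have h2 : q i ⬝ᵥ (A *ᵥ q j) = v i ⬝ᵥ v j := by
      rw [hA, conjTranspose_eq_transpose_of_trivial, ← mulVec_mulVec,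
        dotProduct_mulVec, vecMul_transpose]
    rw [← h2, heig, dotProduct_smul, smul_eq_mul]
  set p : Fin l → (Fin n → ℝ) :=
    fun i => if d i = 0 then 0 else (Real.sqrt (d i))⁻¹ • v i with hp
  have hpv : ∀ i, p i ⬝ᵥ v i = Real.sqrt (d i) := by
    intro i
    by_cases h : d i = 0
    · simp [hp, h]
    · have hs : Real.sqrt (d i) ≠ 0 :=
        Real.sqrt_ne_zero'.mpr (lt_of_le_of_ne (hd0 i) (Ne.symm h))
      simp only [hp, if_neg h, smul_dotProduct, smul_eq_mul, hvv, horth, if_pos rfl, mul_one]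
      rw [← Real.mul_self_sqrt (hd0 i)]
      field_simp
      simp
  have hpp : ∀ i j, p i ⬝ᵥ p j = if i = j then (if d i = 0 then 0 else 1) else 0 := by
    intro i j
    by_cases hi : d i = 0
    · rw [show p i = 0 by simp [hp, hi], zero_dotProduct]
      by_cases hij : i = j
      · subst hij; simp [hi]
      · simp [hij]
    by_cases hj : d j = 0
    · rw [show p j = 0 by simp [hp, hj], dotProduct_zero]
      by_cases hij : i = j
      · exact absurd (hij ▸ hj) hi
      · simp [hij]
    · simp only [hp, if_neg hi, if_neg hj, smul_dotProduct, dotProduct_smul, smul_eq_mul,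
        hvv, horth]
      by_cases hij : i = j
      · subst hij
        simp only [if_pos rfl, mul_one, if_neg hi]
        rw [← Real.mul_self_sqrt (hd0 i)]
        have hs : Real.sqrt (d i) ≠ 0 := Real.sqrt_ne_zero'.mpr
          (lt_of_le_of_ne (hd0 i) (Ne.symm hi))
        field_simp
        simp
      · simp [hij]
  -- matrix of the p's
  set P : Matrix (Fin n) (Fin l) ℝ := Matrix.of (fun k i => p i k) with hP
  have hPap : ∀ k i, P k i = p i k := fun k i => rfl
  have hPtP : Pᵀ * P = diagonal (fun i => if d i = 0 then (0:ℝ) else 1) := by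
    ext i j
    have h3 : (Pᵀ * P) i j = p i ⬝ᵥ p j := by
      simp [mul_apply, dotProduct, hPap, transpose_apply]
    rw [h3, hpp, Matrix.diagonal_apply]
  have hPd : P * diagonal (fun i => if d i = 0 then (0:ℝ) else 1) = P := by
    ext k i
    rw [mul_diagonal]
    by_cases hi : d i = 0
    · simp [hi, hPap, hp]
    · simp [hi]
  set R : Matrix (Fin n) (Fin n) ℝ := P * Pᵀ with hR
  have hRsym : Rᵀ = R := by rw [hR, transpose_mul, transpose_transpose]
  have hRR : R * R = R := by
    rw [hR]
    calc P * Pᵀ * (P * Pᵀ) = P * (Pᵀ * P) * Pᵀ := by simp only [Matrix.mul_assoc]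
    _ = P * Pᵀ := by rw [hPtP, hPd]
  -- sums
  have hQQt : Qm * Qmᵀ = 1 := by
    have := mem_unitaryGroup_iff.mp hH.eigenvectorUnitary.2
    simpa [star_eq_conjTranspose, conjTranspose_eq_transpose_of_trivial] using this
  have hsumb : ∑ i, (Yᵀ *ᵥ q i) ⬝ᵥ (Yᵀ *ᵥ q i) = (Yᵀ * Y).trace := by
    have h4 : ∀ i, (Qmᵀ * ((Y * Yᵀ) * Qm)) i i = (Yᵀ *ᵥ q i) ⬝ᵥ (Yᵀ *ᵥ q i) := by
      intro i
      rw [dotTransposeMulVec]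
      simp [mul_apply, dotProduct, mulVec, hQq, transpose_apply, Finset.mul_sum, mul_comm,
        mul_left_comm]
    calc ∑ i, (Yᵀ *ᵥ q i) ⬝ᵥ (Yᵀ *ᵥ q i) = (Qmᵀ * ((Y * Yᵀ) * Qm)).trace := by
          rw [trace]; exact (Finset.sum_congr rfl fun i _ => (h4 i).symm)
    _ = ((Y * Yᵀ) * (Qm * Qmᵀ)).trace := by
          rw [trace_mul_comm, mul_assoc]
    _ = (Yᵀ * Y).trace := by
          rw [hQQt, mul_one, trace_mul_comm]
  have hsuma : ∑ i, (Xᵀ *ᵥ p i) ⬝ᵥ (Xᵀ *ᵥ p i) ≤ (Xᵀ * X).trace := by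
    have h5 : ∀ i, (Pᵀ * ((X * Xᵀ) * P)) i i = (Xᵀ *ᵥ p i) ⬝ᵥ (Xᵀ *ᵥ p i) := by
      intro i
      rw [dotTransposeMulVec]
      simp [mul_apply, dotProduct, mulVec, hPap, transpose_apply, Finset.mul_sum, mul_comm,
        mul_left_comm]
    have h6 : ∑ i, (Xᵀ *ᵥ p i) ⬝ᵥ (Xᵀ *ᵥ p i) = ((X * Xᵀ) * R).trace := by
      have he : ((X * Xᵀ) * R).trace = (Pᵀ * ((X * Xᵀ) * P)).trace := by
        rw [hR, ← Matrix.mul_assoc, trace_mul_comm]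
      rw [he, trace]
      exact (Finset.sum_congr rfl fun i _ => (h5 i)).symm
    have hid : (1 - R) * (1 - R) = 1 - R := by
      rw [sub_mul, one_mul, mul_sub, mul_one, hRR, sub_self, sub_zero]
    have h7 : ((X * Xᵀ) * R).trace ≤ (X * Xᵀ).trace := by
      have h8 : ((1 - R) * X) * ((1 - R) * X)ᵀ = (1 - R) * (X * Xᵀ) * (1 - R) := by
        rw [transpose_mul]
        rw [show (1 - R)ᵀ = 1 - R by rw [transpose_sub, transpose_one, hRsym]]
        simp only [Matrix.mul_assoc]
      have h9 := trSelfMulTransposeNonneg ((1 - R) * X)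
      rw [h8] at h9
      have h10 : ((1 - R) * (X * Xᵀ) * (1 - R)).trace
          = (X * Xᵀ).trace - ((X * Xᵀ) * R).trace := by
        rw [trace_mul_cycle, hid, sub_mul, one_mul, trace_sub,
          trace_mul_comm R (X * Xᵀ)]
      linarith
    rw [h6]
    have h11 : (X * Xᵀ).trace = (Xᵀ * X).trace := by rw [trace_mul_comm]
    linarith
  -- final assembly
  rw [htr]
  have hkey : ∀ i, Real.sqrt (d i) ≤
      ((Xᵀ *ᵥ p i) ⬝ᵥ (Xᵀ *ᵥ p i) + (Yᵀ *ᵥ q i) ⬝ᵥ (Yᵀ *ᵥ q i)) / 2 := by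
    intro i
    rw [← hpv i]
    have h11 : p i ⬝ᵥ v i = (Xᵀ *ᵥ p i) ⬝ᵥ (Yᵀ *ᵥ q i) := by
      rw [hv]
      show p i ⬝ᵥ (M *ᵥ q i) = _
      rw [hMdef, ← mulVec_mulVec, dotProduct_mulVec, ← mulVec_transpose]
    rw [h11]
    exact dotLeHalf _ _
  calc ∑ i, Real.sqrt (d i)
      ≤ ∑ i, ((Xᵀ *ᵥ p i) ⬝ᵥ (Xᵀ *ᵥ p i) + (Yᵀ *ᵥ q i) ⬝ᵥ (Yᵀ *ᵥ q i)) / 2 :=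
        Finset.sum_le_sum fun i _ => hkey i
    _ = ((∑ i, (Xᵀ *ᵥ p i) ⬝ᵥ (Xᵀ *ᵥ p i)) + ∑ i, (Yᵀ *ᵥ q i) ⬝ᵥ (Yᵀ *ᵥ q i)) / 2 := by
        rw [← Finset.sum_add_distrib, ← Finset.sum_div]
    _ ≤ ((Xᵀ * X).trace + (Yᵀ * Y).trace) / 2 := by
        rw [hsumb]; linarith [hsuma]

private lemma psdTraceNonneg {m : ℕ} {S : Matrix (Fin m) (Fin m) ℝ} (hS : S.PosSemidef) :
    0 ≤ S.trace := by
  exact hS.trace_nonneg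

open scoped MatrixOrder in
private lemma sqTraceBound {m r : ℕ} {K : Matrix (Fin m) (Fin m) ℝ} (hK : K.PosSemidef)
    {lam : ℝ} (hKl : (lam • (1 : Matrix (Fin m) (Fin m) ℝ) - K).PosSemidef)
    (B : Matrix (Fin m) (Fin r) ℝ) :
    (Bᵀ * (K * K) * B).trace ≤ lam * (Bᵀ * K * B).trace := by
  set S := CFC.sqrt K with hSdef
  have hSS : S * S = K := CFC.sqrt_mul_sqrt_self K hK.nonneg
  have hSh : Sᴴ = S := (CFC.sqrt_nonneg K).posSemidef.1
  have hSt : Sᵀ = S := by rw [← conjTranspose_eq_transpose_of_trivial, hSh]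
  have hsks : S * K * S = K * K := by
    rw [← hSS]; simp only [Matrix.mul_assoc]
  have e1 : S * (lam • (1 : Matrix (Fin m) (Fin m) ℝ) - K) * S = lam • K - K * K := by
    rw [Matrix.mul_sub, Matrix.mul_smul, mul_one, Matrix.sub_mul, Matrix.smul_mul, hSS, hsks]
  have hdiff : (lam • K - K * K).PosSemidef := by
    rw [← e1]
    have := hKl.mul_mul_conjTranspose_same S
    rwa [hSh] at this
  have hBpsd := hdiff.conjTranspose_mul_mul_same B
  have htr := psdTraceNonneg hBpsd
  have hBt : Bᴴ = Bᵀ := conjTranspose_eq_transpose_of_trivial B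
  rw [hBt] at htr
  have e2 : Bᵀ * (lam • K - K * K) * B
      = lam • (Bᵀ * K * B) - Bᵀ * (K * K) * B := by
    rw [Matrix.mul_sub, Matrix.sub_mul, Matrix.mul_smul, Matrix.smul_mul]
  rw [e2, trace_sub, trace_smul, smul_eq_mul] at htr
  linarith

/-- Let `K_w ∈ ℝ^{N×N}` and `K_h ∈ ℝ^{L×L}` be symmetric positive semidefinite
kernel matrices whose eigenvalues are all at most `λ_max > 0` (expressed as `λ_max • 1 - K` being
positive semidefinite), and let `B ∈ ℝ^{N×p}`, `C ∈ ℝ^{L×p}`.  Then the matrix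
`F = K_w B Cᵀ K_h` satisfies `‖F‖_* ≤ (λ_max/2) (trace(Bᵀ K_w B) + trace(Cᵀ K_h C))`;
in particular, if `trace(Bᵀ K_w B) + trace(Cᵀ K_h C) ≤ t_B` then `‖F‖_* ≤ λ_max t_B / 2`. -/
theorem nuclearNorm_kernel_factorization_le {N L p : ℕ}
    (Kw : Matrix (Fin N) (Fin N) ℝ) (Kh : Matrix (Fin L) (Fin L) ℝ)
    (hKw : Kw.PosSemidef) (hKh : Kh.PosSemidef)
    (lamMax : ℝ) (hlam : 0 < lamMax)
    (hKwlam : (lamMax • (1 : Matrix (Fin N) (Fin N) ℝ) - Kw).PosSemidef)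
    (hKhlam : (lamMax • (1 : Matrix (Fin L) (Fin L) ℝ) - Kh).PosSemidef)
    (B : Matrix (Fin N) (Fin p) ℝ) (C : Matrix (Fin L) (Fin p) ℝ) :
    nuclearNorm (Kw * B * Cᵀ * Kh) ≤
      lamMax / 2 * ((Bᵀ * Kw * B).trace + (Cᵀ * Kh * C).trace) ∧
    ∀ tB : ℝ, (Bᵀ * Kw * B).trace + (Cᵀ * Kh * C).trace ≤ tB →
      nuclearNorm (Kw * B * Cᵀ * Kh) ≤ lamMax * tB / 2 := by
  have hKwt : Kwᵀ = Kw := by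
    rw [← conjTranspose_eq_transpose_of_trivial, hKw.1]
  have hKht : Khᵀ = Kh := by
    rw [← conjTranspose_eq_transpose_of_trivial, hKh.1]
  have hfact : Kw * B * Cᵀ * Kh = (Kw * B) * (Kh * C)ᵀ := by
    rw [transpose_mul, hKht, Matrix.mul_assoc]
  have h1 := nuclearNorm_factor_le (Kw * B) (Kh * C)
  rw [← hfact] at h1
  have e1 : (Kw * B)ᵀ * (Kw * B) = Bᵀ * (Kw * Kw) * B := by
    rw [transpose_mul, hKwt]; simp only [Matrix.mul_assoc]
  have e2 : (Kh * C)ᵀ * (Kh * C) = Cᵀ * (Kh * Kh) * C := by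
    rw [transpose_mul, hKht]; simp only [Matrix.mul_assoc]
  rw [e1, e2] at h1
  have h2 := sqTraceBound hKw hKwlam B
  have h3 := sqTraceBound hKh hKhlam C
  have hmain : nuclearNorm (Kw * B * Cᵀ * Kh) ≤
      lamMax / 2 * ((Bᵀ * Kw * B).trace + (Cᵀ * Kh * C).trace) := by
    calc nuclearNorm (Kw * B * Cᵀ * Kh)
        ≤ ((Bᵀ * (Kw * Kw) * B).trace + (Cᵀ * (Kh * Kh) * C).trace) / 2 := h1
      _ ≤ lamMax / 2 * ((Bᵀ * Kw * B).trace + (Cᵀ * Kh * C).trace) := by linarith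
  refine ⟨hmain, fun tB htB => ?_⟩
  calc nuclearNorm (Kw * B * Cᵀ * Kh)
      ≤ lamMax / 2 * ((Bᵀ * Kw * B).trace + (Cᵀ * Kh * C).trace) := hmain
    _ ≤ lamMax * tB / 2 := by nlinarith
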